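/- arXiv:2101.00908 — 2 statements merged into one kernel-verified Lean document; each statement's English description precedes it below -/
import Mathlib

section
/- If (x₁*, …, x_m*, λ*) is a competitive equilibrium — i.e., each x_i* lies in C_i and minimizes the price-adjusted cost x_i ↦ f_i(x_i) + ⟪λ*, A_i x_i⟫ over C_i, and the market clears, Σ_i A_i x_i* = b — then (x₁*, …, x_m*) is an optimal solution of the aggregated program: it minimizes Σ_i f_i(x_i) over all (x₁, …, x_m) ∈ Π_i C_i satisfying Σ_i A_i x_i = b. -/
open scoped RealInnerProductSpace

/-- **Competitive equilibrium implies optimality of the aggregated program.**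
If each agent `i` chooses `xstar i ∈ C i` minimizing its price-adjusted cost
`x ↦ f i x + ⟪lamstar, A i x⟫` over `C i`, and the market clears
(`∑ i, A i (xstar i) = b`), then `xstar` minimizes `∑ i, f i (x i)` over all
profiles `x` with `x i ∈ C i` and `∑ i, A i (x i) = b`. -/
theorem competitive_equilibrium_is_aggregate_optimum
    {m k : ℕ} (n : Fin m → ℕ)
    (C : ∀ i : Fin m, Set (EuclideanSpace ℝ (Fin (n i))))
    (f : ∀ i : Fin m, EuclideanSpace ℝ (Fin (n i)) → ℝ)
    (A : ∀ i : Fin m, EuclideanSpace ℝ (Fin (n i)) →ₗ[ℝ] EuclideanSpace ℝ (Fin k))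
    (b : EuclideanSpace ℝ (Fin k))
    (xstar : ∀ i : Fin m, EuclideanSpace ℝ (Fin (n i)))
    (lamstar : EuclideanSpace ℝ (Fin k))
    (hmem : ∀ i, xstar i ∈ C i)
    (hagent : ∀ i, ∀ y ∈ C i,
      f i (xstar i) + ⟪lamstar, A i (xstar i)⟫ ≤ f i y + ⟪lamstar, A i y⟫)
    (hclear : ∑ i, A i (xstar i) = b) :
    ∀ x : ∀ i : Fin m, EuclideanSpace ℝ (Fin (n i)),
      (∀ i, x i ∈ C i) → ∑ i, A i (x i) = b →
        ∑ i, f i (xstar i) ≤ ∑ i, f i (x i) := by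
  intro x hx hc
  have key : ∑ i, (f i (xstar i) + ⟪lamstar, A i (xstar i)⟫)
      ≤ ∑ i, (f i (x i) + ⟪lamstar, A i (x i)⟫) :=
    Finset.sum_le_sum fun i _ => hagent i (x i) (hx i)
  have h1 : ∑ i, ⟪lamstar, A i (xstar i)⟫ = ⟪lamstar, b⟫ := by
    rw [← inner_sum, hclear]
  have h2 : ∑ i, ⟪lamstar, A i (x i)⟫ = ⟪lamstar, b⟫ := by
    rw [← inner_sum, hc]
  rw [Finset.sum_add_distrib, Finset.sum_add_distrib, h1, h2] at key
  linarith
end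

section
/- If each cost f_i is strictly convex on C_i, then the equilibrium allocation is unique: for any two competitive equilibria (x₁*, …, x_m*, λ*) and (y₁*, …, y_m*, μ*), one has x_i* = y_i* for every agent i. -/
open scoped RealInnerProductSpace

/-- **Uniqueness of the equilibrium allocation under strict convexity.**
If each cost `f i` is strictly convex on `C i`, then any two competitive
equilibria `(xstar, lamstar)` and `(ystar, mustar)` have the same allocation:
`xstar i = ystar i` for every agent `i`. -/
theorem equilibrium_allocation_unique_of_strictConvex
    {m k : ℕ} (n : Fin m → ℕ)
    (C : ∀ i : Fin m, Set (EuclideanSpace ℝ (Fin (n i))))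
    (f : ∀ i : Fin m, EuclideanSpace ℝ (Fin (n i)) → ℝ)
    (A : ∀ i : Fin m, EuclideanSpace ℝ (Fin (n i)) →ₗ[ℝ] EuclideanSpace ℝ (Fin k))
    (b : EuclideanSpace ℝ (Fin k))
    (hf : ∀ i, StrictConvexOn ℝ (C i) (f i))
    (xstar ystar : ∀ i : Fin m, EuclideanSpace ℝ (Fin (n i)))
    (lamstar mustar : EuclideanSpace ℝ (Fin k))
    (hxmem : ∀ i, xstar i ∈ C i)
    (hxagent : ∀ i, ∀ y ∈ C i,
      f i (xstar i) + ⟪lamstar, A i (xstar i)⟫ ≤ f i y + ⟪lamstar, A i y⟫)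
    (hxclear : ∑ i, A i (xstar i) = b)
    (hymem : ∀ i, ystar i ∈ C i)
    (hyagent : ∀ i, ∀ y ∈ C i,
      f i (ystar i) + ⟪mustar, A i (ystar i)⟫ ≤ f i y + ⟪mustar, A i y⟫)
    (hyclear : ∑ i, A i (ystar i) = b) :
    ∀ i, xstar i = ystar i := by
  -- Total costs are equal.
  have hsum1 : ∑ i, (f i (xstar i) + ⟪lamstar, A i (xstar i)⟫)
      ≤ ∑ i, (f i (ystar i) + ⟪lamstar, A i (ystar i)⟫) :=
    Finset.sum_le_sum fun i _ => hxagent i (ystar i) (hymem i)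
  have hsum2 : ∑ i, (f i (ystar i) + ⟪mustar, A i (ystar i)⟫)
      ≤ ∑ i, (f i (xstar i) + ⟪mustar, A i (xstar i)⟫) :=
    Finset.sum_le_sum fun i _ => hyagent i (xstar i) (hxmem i)
  have hinner : ∀ (v : EuclideanSpace ℝ (Fin k))
      (w : ∀ i : Fin m, EuclideanSpace ℝ (Fin (n i))),
      ∑ i, A i (w i) = b → ∑ i, ⟪v, A i (w i)⟫ = ⟪v, b⟫ := by
    intro v w hw
    rw [← inner_sum, hw]
  have hfeq : ∑ i, f i (xstar i) = ∑ i, f i (ystar i) := by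
    have h1 : ∑ i, f i (xstar i) ≤ ∑ i, f i (ystar i) := by
      have := hsum1
      rw [Finset.sum_add_distrib, Finset.sum_add_distrib,
        hinner lamstar xstar hxclear, hinner lamstar ystar hyclear] at this
      linarith
    have h2 : ∑ i, f i (ystar i) ≤ ∑ i, f i (xstar i) := by
      have := hsum2
      rw [Finset.sum_add_distrib, Finset.sum_add_distrib,
        hinner mustar xstar hxclear, hinner mustar ystar hyclear] at this
      linarith
    linarith
  -- Suppose some xstar i ≠ ystar i; derive a contradiction via the midpoint.
  intro i
  by_contra hne
  set z : ∀ j : Fin m, EuclideanSpace ℝ (Fin (n j)) :=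
    fun j => (1/2 : ℝ) • xstar j + (1/2 : ℝ) • ystar j with hz
  have hzmem : ∀ j, z j ∈ C j := fun j =>
    (hf j).1 (hxmem j) (hymem j) (by norm_num) (by norm_num) (by norm_num)
  have hzclear : ∑ j, A j (z j) = b := by
    simp only [hz, map_add, map_smul, Finset.sum_add_distrib, ← Finset.smul_sum,
      hxclear, hyclear]
    module
  have hxz : ∑ j, f j (xstar j) ≤ ∑ j, f j (z j) := by
    have h := Finset.sum_le_sum fun j (_ : j ∈ Finset.univ) =>
      hxagent j (z j) (hzmem j)
    rw [Finset.sum_add_distrib, Finset.sum_add_distrib,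
      hinner lamstar xstar hxclear, hinner lamstar z hzclear] at h
    linarith
  have hconv : ∀ j, f j (z j) ≤ (1/2 : ℝ) * f j (xstar j) + (1/2 : ℝ) * f j (ystar j) := by
    intro j
    by_cases h : xstar j = ystar j
    · have hzj : z j = ystar j := by
        rw [hz]; simp only [h, ← add_smul]; norm_num
      rw [hzj, h]; linarith
    · exact le_of_lt <| (hf j).2 (hxmem j) (hymem j) h (by norm_num) (by norm_num)
        (by norm_num)
  have hstrict : f i (z i) < (1/2 : ℝ) * f i (xstar i) + (1/2 : ℝ) * f i (ystar i) :=
    (hf i).2 (hxmem i) (hymem i) hne (by norm_num) (by norm_num) (by norm_num)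
  have hlt : ∑ j, f j (z j)
      < ∑ j, ((1/2 : ℝ) * f j (xstar j) + (1/2 : ℝ) * f j (ystar j)) :=
    Finset.sum_lt_sum (fun j _ => hconv j) ⟨i, Finset.mem_univ i, hstrict⟩
  rw [Finset.sum_add_distrib, ← Finset.mul_sum, ← Finset.mul_sum, ← hfeq] at hlt
  linarith
end
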